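/- Fix σ ∈ (0,2), m ≥ 1 such that s ↦ m s^{m−1} is Lipschitz on [0,B] with constant L, T > 0, a > 0, Δx > 0, Δt > 0, integers I, K ≥ 2, J ≥ 1 with JΔt = T, and constants B, C₁, C₂, C₃, C₄, C₅ ≥ 0. Let u assign a value u_j^{i,k} ∈ [0,B] to each grid node (i,k) (0 ≤ i ≤ I, 0 ≤ k ≤ K) and each time 0 ≤ j ≤ J (the values of the exact solution of the whole-space problem), and let U_j^{i,k} ∈ [0,B] be numbers with U_j^{i,k} = 0 whenever (i,k) is a node of the lateral/top boundary Γ_h (the scheme, posed with zero lateral data). Assume: (i) CFL: ν_σ m B^{m−1} Δt ≤ Δx^σ; (ii) scheme: for 1 ≤ j ≤ J and 0 < i < I, U_j^{i,0} = U_{j−1}^{i,0} + ν_σ (Δt/Δx^σ)((U_{j−1}^{i,1})^m − (U_{j−1}^{i,0})^m); (iii) truncation: |u_j^{i,0} − u_{j−1}^{i,0} − ν_σ (Δt/Δx^σ)((u_{j−1}^{i,1})^m − (u_{j−1}^{i,0})^m)| ≤ C₁ Δt (Δt + Δx^{2−σ}) for all 1 ≤ j ≤ J and 0 < i < I; (iv)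 error propagation: for every j, max over all nodes of |u_j^{i,k} − U_j^{i,k}| ≤ max(max over 0 < i < I of |u_j^{i,0} − U_j^{i,0}|, max over Γ_h nodes of |u_j^{i,k} − U_j^{i,k}|) + C₂ Δx^a; (v) lateral smallness: |u_j^{i,k}| ≤ C₅ Δx^a at every node of Γ_h and every j (which holds when the exact solution obeys the Barenblatt-type decay u ≤ C t^{βσ}|x|^{−(N+σ)} and the domain satisfies X ≥ L₀ Δx^{−a/(N+σ)}); (vi) spatial regularity: |u_j^{i,1} − u_j^{i,0}| ≤ C₃ Δx^σ and |U_j^{i,1} − U_j^{i,0}| ≤ C₃ Δx^σ for all i, j; (vii) initial error: max over all nodes of |u_0^{i,k} − U_0^{i,k}| ≤ C₄ Δx^a. Then there exists a constant C, depending only on σ, m, L, T, B, ν_σ and C₁,…,C₅ (but not on Δx, Δt, I, K, J), such that max over all i, k, j of |u_j^{i,k} − U_j^{i,k}| ≤ C (Δt + Δx^{2−σ} + Δx^a/Δt). -/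

import Mathlib

set_option maxHeartbeats 1000000

/-- One-step stability estimate for the explicit scheme, via a synchronized
mean value theorem applied to `t ↦ (a+t(b-a))^m - (a'+t(b'-a'))^m`. -/
lemma stmt19_key (m B L μ δ M : ℝ) (hm : 1 ≤ m) (hL : 0 ≤ L)
    (hLip : ∀ s ∈ Set.Icc (0:ℝ) B, ∀ t ∈ Set.Icc (0:ℝ) B,
      |m * s ^ (m - 1) - m * t ^ (m - 1)| ≤ L * |s - t|)
    (hμ : 0 ≤ μ) (hCFL : μ * (m * B ^ (m-1)) ≤ 1)
    (a b a' b' : ℝ) (haI : a ∈ Set.Icc (0:ℝ) B) (hbI : b ∈ Set.Icc (0:ℝ) B)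
    (haI' : a' ∈ Set.Icc (0:ℝ) B) (hbI' : b' ∈ Set.Icc (0:ℝ) B)
    (hM : 0 ≤ M) (hδ : 0 ≤ δ) (haa : |a - a'| ≤ M) (hbb : |b - b'| ≤ M)
    (hba : |b - a| ≤ δ) :
    |(a - a') + μ * ((b ^ m - a ^ m) - (b' ^ m - a' ^ m))| ≤ (1 + μ * L * δ) * M := by
  -- MVT for g(t) = (a+t(b-a))^m - (a'+t(b'-a'))^m on [0,1]
  set g : ℝ → ℝ := fun t => (a + t * (b - a)) ^ m - (a' + t * (b' - a')) ^ m with hg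
  have hderiv : ∀ t : ℝ, HasDerivAt g
      ((b - a) * (m * (a + t * (b - a)) ^ (m-1))
        - (b' - a') * (m * (a' + t * (b' - a')) ^ (m-1))) t := by
    intro t
    have h1 : HasDerivAt (fun t : ℝ => a + t * (b - a)) (b - a) t := by
      simpa using ((hasDerivAt_id t).mul_const (b - a)).const_add a
    have h2 : HasDerivAt (fun t : ℝ => a' + t * (b' - a')) (b' - a') t := by
      simpa using ((hasDerivAt_id t).mul_const (b' - a')).const_add a'
    have h3 := h1.rpow_const (p := m) (Or.inr hm)
    have h4 := h2.rpow_const (p := m) (Or.inr hm)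
    have h5 := h3.sub h4
    exact h5.congr_deriv (by ring)
  obtain ⟨θ, hθ, hslope⟩ := exists_hasDerivAt_eq_slope g _ (by norm_num : (0:ℝ) < 1)
    (fun t _ => (hderiv t).continuousAt.continuousWithinAt) (fun t _ => hderiv t)
  have hg1 : g 1 = b ^ m - b' ^ m := by simp [hg]
  have hg0 : g 0 = a ^ m - a' ^ m := by simp [hg]
  set pu := a + θ * (b - a) with hpu
  set pU := a' + θ * (b' - a') with hpU
  have hθ0 : 0 ≤ θ := le_of_lt hθ.1
  have hθ1 : θ ≤ 1 := le_of_lt hθ.2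
  have hpuI : pu ∈ Set.Icc (0:ℝ) B := by
    constructor <;> nlinarith [haI.1, haI.2, hbI.1, hbI.2]
  have hpUI : pU ∈ Set.Icc (0:ℝ) B := by
    constructor <;> nlinarith [haI'.1, haI'.2, hbI'.1, hbI'.2]
  have hD : (b ^ m - a ^ m) - (b' ^ m - a' ^ m)
      = (b - a) * (m * pu ^ (m-1)) - (b' - a') * (m * pU ^ (m-1)) := by
    rw [hg1, hg0] at hslope
    have h10 : ((1:ℝ) - 0) = 1 := by norm_num
    rw [h10, div_one] at hslope
    linarith [hslope]
  set cu := m * pu ^ (m-1) with hcu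
  set cU := m * pU ^ (m-1) with hcU
  -- basic bounds on the coefficients
  have hcU0 : 0 ≤ cU := by
    have : (0:ℝ) ≤ pU ^ (m-1) := Real.rpow_nonneg hpUI.1 _
    nlinarith
  have hcUB : cU ≤ m * B ^ (m-1) := by
    have : pU ^ (m-1) ≤ B ^ (m-1) := Real.rpow_le_rpow hpUI.1 hpUI.2 (by linarith)
    nlinarith
  have hμcU : μ * cU ≤ 1 := le_trans (by nlinarith) hCFL
  have hLipc : |cu - cU| ≤ L * M := by
    have h := hLip pu hpuI pU hpUI
    have hpp : |pu - pU| ≤ M := by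
      have he : pu - pU = (1 - θ) * (a - a') + θ * (b - b') := by rw [hpu, hpU]; ring
      rw [he]
      calc |(1 - θ) * (a - a') + θ * (b - b')|
          ≤ |(1 - θ) * (a - a')| + |θ * (b - b')| := abs_add_le _ _
        _ = (1 - θ) * |a - a'| + θ * |b - b'| := by
            rw [abs_mul, abs_mul, abs_of_nonneg (by linarith : (0:ℝ) ≤ 1 - θ),
              abs_of_nonneg hθ0]
        _ ≤ (1 - θ) * M + θ * M := by
            have := abs_nonneg (a - a')
            have := abs_nonneg (b - b')
            nlinarith
        _ = M := by ring
    calc |cu - cU| ≤ L * |pu - pU| := h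
      _ ≤ L * M := by nlinarith
  -- decompose and estimate
  have hdecomp : (a - a') + μ * ((b ^ m - a ^ m) - (b' ^ m - a' ^ m))
      = (1 - μ * cU) * (a - a') + μ * cU * (b - b') + μ * (cu - cU) * (b - a) := by
    rw [hD]; ring
  rw [hdecomp]
  have habs1 : |(1 - μ * cU) * (a - a')| ≤ (1 - μ * cU) * M := by
    rw [abs_mul, abs_of_nonneg (by linarith : (0:ℝ) ≤ 1 - μ * cU)]
    nlinarith
  have habs2 : |μ * cU * (b - b')| ≤ μ * cU * M := by
    rw [abs_mul, abs_of_nonneg (by positivity : (0:ℝ) ≤ μ * cU)]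
    nlinarith [abs_nonneg (b - b'), mul_nonneg hμ hcU0]
  have habs3 : |μ * (cu - cU) * (b - a)| ≤ μ * (L * M) * δ := by
    rw [abs_mul, abs_mul, abs_of_nonneg hμ]
    have h1 : |cu - cU| * |b - a| ≤ (L * M) * δ := by
      have := abs_nonneg (cu - cU)
      have := abs_nonneg (b - a)
      nlinarith [mul_nonneg hL hM]
    nlinarith
  calc |(1 - μ * cU) * (a - a') + μ * cU * (b - b') + μ * (cu - cU) * (b - a)|
      ≤ |(1 - μ * cU) * (a - a') + μ * cU * (b - b')| + |μ * (cu - cU) * (b - a)| :=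
        abs_add_le _ _
    _ ≤ |(1 - μ * cU) * (a - a')| + |μ * cU * (b - b')| + |μ * (cu - cU) * (b - a)| := by
        have := abs_add_le ((1 - μ * cU) * (a - a')) (μ * cU * (b - b'))
        linarith
    _ ≤ (1 - μ * cU) * M + μ * cU * M + μ * (L * M) * δ := by linarith
    _ = (1 + μ * L * δ) * M := by ring



/-- `ν_σ = σ μ_σ` with `μ_σ = 2^{σ-1} Γ(σ/2) / Γ(1-σ/2)`. -/
noncomputable def nuSigma (σ : ℝ) : ℝ :=
  σ * (2 ^ (σ - 1) * Real.Gamma (σ / 2) / Real.Gamma (1 - σ / 2))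

/-- Convergence of the bounded-domain scheme (zero lateral data) to
the whole-space solution (Section 7): with the additional hypothesis that the exact
solution is of size `O(Δx^a)` on the lateral/top boundary `Γ_h`, the total error is
again `O(Δt + Δx^{2-σ} + Δx^a/Δt)`, with a constant independent of `Δx, Δt, I, K, J`. -/
theorem stmt19 (σ m L T B a C₁ C₂ C₃ C₄ C₅ : ℝ)
    (hσ : σ ∈ Set.Ioo (0:ℝ) 2) (hm : 1 ≤ m)
    (hLip : ∀ s ∈ Set.Icc (0:ℝ) B, ∀ t ∈ Set.Icc (0:ℝ) B,
      |m * s ^ (m - 1) - m * t ^ (m - 1)| ≤ L * |s - t|)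
    (hT : 0 < T) (ha : 0 < a) (hB : 0 ≤ B)
    (hC₁ : 0 ≤ C₁) (hC₂ : 0 ≤ C₂) (hC₃ : 0 ≤ C₃) (hC₄ : 0 ≤ C₄) (hC₅ : 0 ≤ C₅) :
    ∃ C > 0, ∀ (Δx Δt : ℝ) (I K J : ℕ) (u U : ℕ → ℕ → ℕ → ℝ),
      0 < Δx → 0 < Δt → 2 ≤ I → 2 ≤ K → 1 ≤ J → (J : ℝ) * Δt = T →
      (∀ j ≤ J, ∀ i ≤ I, ∀ k ≤ K, u j i k ∈ Set.Icc (0:ℝ) B) →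
      (∀ j ≤ J, ∀ i ≤ I, ∀ k ≤ K, U j i k ∈ Set.Icc (0:ℝ) B) →
      -- zero lateral data for the scheme
      (∀ j ≤ J, ∀ i ≤ I, ∀ k ≤ K, (i = 0 ∨ i = I ∨ k = K) → U j i k = 0) →
      -- (i) CFL
      nuSigma σ * m * B ^ (m - 1) * Δt ≤ Δx ^ σ →
      -- (ii) scheme
      (∀ j, 1 ≤ j → j ≤ J → ∀ i, 0 < i → i < I →
        U j i 0 = U (j-1) i 0
          + nuSigma σ * (Δt / Δx ^ σ) * ((U (j-1) i 1) ^ m - (U (j-1) i 0) ^ m)) →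
      -- (iii) truncation
      (∀ j, 1 ≤ j → j ≤ J → ∀ i, 0 < i → i < I →
        |u j i 0 - u (j-1) i 0
            - nuSigma σ * (Δt / Δx ^ σ) * ((u (j-1) i 1) ^ m - (u (j-1) i 0) ^ m)|
          ≤ C₁ * Δt * (Δt + Δx ^ (2 - σ))) →
      -- (iv) error propagation
      (∀ j ≤ J, ∀ i ≤ I, ∀ k ≤ K,
        (∃ i', 0 < i' ∧ i' < I ∧
          |u j i k - U j i k| ≤ |u j i' 0 - U j i' 0| + C₂ * Δx ^ a)
        ∨ (∃ i' k', i' ≤ I ∧ k' ≤ K ∧ (i' = 0 ∨ i' = I ∨ k' = K) ∧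
          |u j i k - U j i k| ≤ |u j i' k' - U j i' k'| + C₂ * Δx ^ a)) →
      -- (v) lateral smallness of the exact solution
      (∀ j ≤ J, ∀ i ≤ I, ∀ k ≤ K, (i = 0 ∨ i = I ∨ k = K) → |u j i k| ≤ C₅ * Δx ^ a) →
      -- (vi) spatial regularity
      (∀ j ≤ J, ∀ i ≤ I,
        |u j i 1 - u j i 0| ≤ C₃ * Δx ^ σ ∧ |U j i 1 - U j i 0| ≤ C₃ * Δx ^ σ) →
      -- (vii) initial error
      (∀ i ≤ I, ∀ k ≤ K, |u 0 i k - U 0 i k| ≤ C₄ * Δx ^ a) →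
      ∀ j ≤ J, ∀ i ≤ I, ∀ k ≤ K,
        |u j i k - U j i k| ≤ C * (Δt + Δx ^ (2 - σ) + Δx ^ a / Δt) := by
  obtain ⟨hσ0, hσ2⟩ := hσ
  have hν : 0 < nuSigma σ := by
    have h1 : 0 < Real.Gamma (σ / 2) := Real.Gamma_pos_of_pos (by linarith)
    have h2 : 0 < Real.Gamma (1 - σ / 2) := Real.Gamma_pos_of_pos (by linarith)
    have h3 : (0:ℝ) < 2 ^ (σ - 1) := Real.rpow_pos_of_pos (by norm_num) _
    exact mul_pos hσ0 (div_pos (mul_pos h3 h1) h2)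
  set L' := max L 0 with hL'def
  have hL' : 0 ≤ L' := le_max_right L 0
  have hLip' : ∀ s ∈ Set.Icc (0:ℝ) B, ∀ t ∈ Set.Icc (0:ℝ) B,
      |m * s ^ (m - 1) - m * t ^ (m - 1)| ≤ L' * |s - t| := by
    intro s hs t ht
    exact le_trans (hLip s hs t ht)
      (mul_le_mul_of_nonneg_right (le_max_left L 0) (abs_nonneg _))
  set γ := nuSigma σ * L' * C₃ with hγdef
  have hγ : 0 ≤ γ := by
    apply mul_nonneg (mul_nonneg hν.le hL') hC₃
  set Cf := Real.exp (γ * T) * T * (C₁ + C₂ + C₄ + C₅) + 1 with hCf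
  have hCfpos : 0 < Cf := by
    have h1 : 0 ≤ Real.exp (γ * T) * T * (C₁ + C₂ + C₄ + C₅) :=
      mul_nonneg (mul_nonneg (Real.exp_pos _).le hT.le) (by linarith)
    rw [hCf]; linarith
  refine ⟨Cf, hCfpos, ?_⟩
  intro Δx Δt I K J u U hΔx hΔt hI hK hJ hJT hu hU hU0 hCFL hscheme htrunc hprop hlat hreg hinit
  have hΔxσ : 0 < Δx ^ σ := Real.rpow_pos_of_pos hΔx σ
  have hΔx2σ : 0 < Δx ^ (2 - σ) := Real.rpow_pos_of_pos hΔx _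
  have hΔxa : 0 < Δx ^ a := Real.rpow_pos_of_pos hΔx a
  set μ := nuSigma σ * (Δt / Δx ^ σ) with hμdef
  have hμ0 : 0 ≤ μ := by
    apply mul_nonneg hν.le (div_nonneg hΔt.le hΔxσ.le)
  have hCFL' : μ * (m * B ^ (m-1)) ≤ 1 := by
    rw [hμdef, show nuSigma σ * (Δt / Δx ^ σ) * (m * B ^ (m-1))
      = (nuSigma σ * m * B ^ (m-1) * Δt) / Δx ^ σ by ring, div_le_one hΔxσ]
    exact hCFL
  have hμγ : μ * L' * (C₃ * Δx ^ σ) = γ * Δt := by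
    rw [hμdef, hγdef]; field_simp
  set P := C₁ * Δt * (Δt + Δx ^ (2-σ)) + (C₂ + C₅) * Δx ^ a with hPdef
  have hP0 : 0 ≤ P := by
    have : 0 ≤ C₁ * Δt * (Δt + Δx ^ (2-σ)) := by positivity
    have : 0 ≤ (C₂ + C₅) * Δx ^ a := by positivity
    rw [hPdef]; linarith
  set R : ℕ → ℝ := fun j => (1 + γ * Δt) ^ j * (C₄ * Δx ^ a + j * P) with hRdef
  have h1γ : 1 ≤ 1 + γ * Δt := by nlinarith
  have hR0 : ∀ j, 0 ≤ R j := by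
    intro j
    apply mul_nonneg (pow_nonneg (by linarith) j)
    have : (0:ℝ) ≤ (j:ℝ) * P := mul_nonneg (Nat.cast_nonneg j) hP0
    nlinarith
  -- the inductive step relation
  have hRstep : ∀ j : ℕ, (1 + γ * Δt) * R j + P ≤ R (j+1) := by
    intro j
    have hpow : (1:ℝ) ≤ (1 + γ * Δt) ^ (j+1) := one_le_pow₀ h1γ
    have e1 : R (j+1) = (1 + γ * Δt) * R j + (1 + γ * Δt) ^ (j+1) * P := by
      simp only [hRdef, pow_succ]
      push_cast
      ring
    nlinarith
  -- main induction
  have main : ∀ j, j ≤ J → ∀ i ≤ I, ∀ k ≤ K, |u j i k - U j i k| ≤ R j := by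
    intro j
    induction j with
    | zero =>
      intro _ i hi k hk
      have := hinit i hi k hk
      simpa [hRdef] using this
    | succ j ih =>
      intro hjJ i hi k hk
      have hjJ' : j ≤ J := le_of_lt (Nat.lt_of_succ_le hjJ)
      have ihj := ih hjJ'
      have h1K : 1 ≤ K := by omega
      -- interior estimate at time j+1
      have hint : ∀ i', 0 < i' → i' < I →
          |u (j+1) i' 0 - U (j+1) i' 0|
            ≤ (1 + γ * Δt) * R j + C₁ * Δt * (Δt + Δx ^ (2-σ)) := by
        intro i' hi'0 hi'I
        have hi'I' : i' ≤ I := le_of_lt hi'I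
        have hs := hscheme (j+1) (Nat.le_add_left 1 j) hjJ i' hi'0 hi'I
        have ht := htrunc (j+1) (Nat.le_add_left 1 j) hjJ i' hi'0 hi'I
        simp only [Nat.add_sub_cancel] at hs ht
        have key := stmt19_key m B L' μ (C₃ * Δx ^ σ) (R j) hm hL' hLip' hμ0 hCFL'
          (u j i' 0) (u j i' 1) (U j i' 0) (U j i' 1)
          (hu j hjJ' i' hi'I' 0 (Nat.zero_le K)) (hu j hjJ' i' hi'I' 1 h1K)
          (hU j hjJ' i' hi'I' 0 (Nat.zero_le K)) (hU j hjJ' i' hi'I' 1 h1K)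
          (hR0 j) (by positivity) (ihj i' hi'I' 0 (Nat.zero_le K)) (ihj i' hi'I' 1 h1K)
          ((hreg j hjJ' i' hi'I').1)
        rw [hμγ] at key
        have heq : u (j+1) i' 0 - U (j+1) i' 0
            = (u (j+1) i' 0 - u j i' 0
                - nuSigma σ * (Δt / Δx ^ σ) * ((u j i' 1) ^ m - (u j i' 0) ^ m))
              + ((u j i' 0 - U j i' 0)
                + μ * (((u j i' 1) ^ m - (u j i' 0) ^ m)
                    - ((U j i' 1) ^ m - (U j i' 0) ^ m))) := by
          rw [hs, hμdef]; ring
        calc |u (j+1) i' 0 - U (j+1) i' 0|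
            ≤ |u (j+1) i' 0 - u j i' 0
                - nuSigma σ * (Δt / Δx ^ σ) * ((u j i' 1) ^ m - (u j i' 0) ^ m)|
              + |(u j i' 0 - U j i' 0)
                + μ * (((u j i' 1) ^ m - (u j i' 0) ^ m)
                    - ((U j i' 1) ^ m - (U j i' 0) ^ m))| := by
              rw [heq]; exact abs_add_le _ _
          _ ≤ C₁ * Δt * (Δt + Δx ^ (2-σ)) + (1 + γ * Δt) * R j := add_le_add ht key
          _ = (1 + γ * Δt) * R j + C₁ * Δt * (Δt + Δx ^ (2-σ)) := by ring
      -- conclude for the node (i,k) via the propagation hypothesis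
      rcases hprop (j+1) hjJ i hi k hk with ⟨i', hi'0, hi'I, hb⟩ | ⟨i', k', hi', hk', hbdry, hb⟩
      · have h1 := hint i' hi'0 hi'I
        have h2 : C₁ * Δt * (Δt + Δx ^ (2-σ)) + C₂ * Δx ^ a ≤ P := by
          have h5 : 0 ≤ C₅ * Δx ^ a := by positivity
          rw [hPdef]; linarith
        have h3 := hRstep j
        calc |u (j+1) i k - U (j+1) i k|
            ≤ |u (j+1) i' 0 - U (j+1) i' 0| + C₂ * Δx ^ a := hb
          _ ≤ R (j+1) := by linarith
      · have hUz := hU0 (j+1) hjJ i' hi' k' hk' hbdry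
        have hu5 := hlat (j+1) hjJ i' hi' k' hk' hbdry
        have h2 : (C₅ + C₂) * Δx ^ a ≤ P := by
          have h5 : 0 ≤ C₁ * Δt * (Δt + Δx ^ (2-σ)) := by positivity
          rw [hPdef]; linarith
        have h3 := hRstep j
        have h4 : 0 ≤ (1 + γ * Δt) * R j := mul_nonneg (by linarith) (hR0 j)
        calc |u (j+1) i k - U (j+1) i k|
            ≤ |u (j+1) i' k' - U (j+1) i' k'| + C₂ * Δx ^ a := hb
          _ = |u (j+1) i' k'| + C₂ * Δx ^ a := by rw [hUz, sub_zero]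
          _ ≤ C₅ * Δx ^ a + C₂ * Δx ^ a := by linarith
          _ ≤ R (j+1) := by linarith
  -- conclusion: R j ≤ Cf * S
  intro j hj i hi k hk
  refine le_trans (main j hj i hi k hk) ?_
  set S := Δt + Δx ^ (2 - σ) + Δx ^ a / Δt with hSdef
  have hS0 : 0 < S := by
    have : 0 < Δx ^ a / Δt := div_pos hΔxa hΔt
    rw [hSdef]; linarith
  have hJ1 : (1:ℝ) ≤ (J:ℝ) := by exact_mod_cast hJ
  have hΔtT : Δt ≤ T := by nlinarith
  have hpj : (1 + γ * Δt) ^ j ≤ Real.exp (γ * T) := by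
    calc (1 + γ * Δt) ^ j ≤ Real.exp (γ * Δt) ^ j := by
          apply pow_le_pow_left₀ (by linarith)
          linarith [Real.add_one_le_exp (γ * Δt)]
      _ = Real.exp ((j:ℝ) * (γ * Δt)) := (Real.exp_nat_mul _ j).symm
      _ ≤ Real.exp (γ * T) := by
          apply Real.exp_le_exp.mpr
          have hjc : (j:ℝ) ≤ (J:ℝ) := by exact_mod_cast hj
          have hh1 : (j:ℝ) * (γ * Δt) ≤ (J:ℝ) * (γ * Δt) :=
            mul_le_mul_of_nonneg_right hjc (mul_nonneg hγ hΔt.le)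
          have hh2 : (J:ℝ) * (γ * Δt) = γ * T := by rw [← hJT]; ring
          linarith
  have hjP : (j:ℝ) * P ≤ (J:ℝ) * P := by
    have hjc : (j:ℝ) ≤ (J:ℝ) := by exact_mod_cast hj
    exact mul_le_mul_of_nonneg_right hjc hP0
  have hexp : (J:ℝ) * P = C₁ * T * (Δt + Δx ^ (2-σ)) + (C₂ + C₅) * (T * (Δx ^ a / Δt)) := by
    rw [hPdef, ← hJT]; field_simp
  have hxa : Δx ^ a ≤ T * (Δx ^ a / Δt) := by
    rw [show T * (Δx ^ a / Δt) = (T / Δt) * Δx ^ a by ring]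
    have h6 : (1:ℝ) ≤ T / Δt := (one_le_div hΔt).mpr hΔtT
    exact le_mul_of_one_le_left hΔxa.le h6
  have hs1 : Δt + Δx ^ (2-σ) ≤ S := by
    have : 0 ≤ Δx ^ a / Δt := (div_pos hΔxa hΔt).le
    rw [hSdef]; linarith
  have hs2 : Δx ^ a / Δt ≤ S := by rw [hSdef]; linarith
  have hsum : C₄ * Δx ^ a + (J:ℝ) * P ≤ T * (C₁ + C₂ + C₄ + C₅) * S := by
    rw [hexp]
    have e1 : C₄ * Δx ^ a ≤ C₄ * (T * (Δx ^ a / Δt)) :=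
      mul_le_mul_of_nonneg_left hxa hC₄
    have e2 : C₄ * (T * (Δx ^ a / Δt)) ≤ C₄ * T * S := by
      have h := mul_le_mul_of_nonneg_left hs2 (mul_nonneg hC₄ hT.le)
      linarith
    have e3 : C₁ * T * (Δt + Δx ^ (2-σ)) ≤ C₁ * T * S := by
      have h := mul_le_mul_of_nonneg_left hs1 (mul_nonneg hC₁ hT.le)
      linarith
    have e4 : (C₂ + C₅) * (T * (Δx ^ a / Δt)) ≤ (C₂ + C₅) * T * S := by
      have h := mul_le_mul_of_nonneg_left hs2 (mul_nonneg (by linarith : (0:ℝ) ≤ C₂ + C₅) hT.le)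
      linarith
    nlinarith
  have hfin : R j ≤ Real.exp (γ * T) * (T * (C₁ + C₂ + C₄ + C₅) * S) := by
    have h1 : R j ≤ Real.exp (γ * T) * (C₄ * Δx ^ a + (J:ℝ) * P) := by
      rw [hRdef]
      have hb1 : C₄ * Δx ^ a + (j:ℝ) * P ≤ C₄ * Δx ^ a + (J:ℝ) * P := by linarith
      have hb0 : 0 ≤ C₄ * Δx ^ a + (j:ℝ) * P := by
        have h7 : (0:ℝ) ≤ (j:ℝ) * P := mul_nonneg (Nat.cast_nonneg j) hP0
        have h8 : (0:ℝ) ≤ C₄ * Δx ^ a := by positivity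
        linarith
      exact mul_le_mul hpj hb1 hb0 (Real.exp_pos _).le
    calc R j ≤ Real.exp (γ * T) * (C₄ * Δx ^ a + (J:ℝ) * P) := h1
      _ ≤ Real.exp (γ * T) * (T * (C₁ + C₂ + C₄ + C₅) * S) :=
          mul_le_mul_of_nonneg_left hsum (Real.exp_pos _).le
  calc R j ≤ Real.exp (γ * T) * (T * (C₁ + C₂ + C₄ + C₅) * S) := hfin
    _ ≤ Cf * S := by rw [hCf]; nlinarith [hS0.le]
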